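/- arXiv:0904.4067 — 2 statements merged into one kernel-verified Lean document; each statement's English description precedes it below -/
import Mathlib

section
/- Let p, q, x be elements of a free group of rank 2g with energy function ‖·‖ as above. Suppose ‖p‖ < ‖q‖, |q| ≤ |x|, and the product qx involves no cancellation (i.e. |qx| = |q| + |x|). Then ‖px‖ + ‖x⁻¹p⁻¹‖ < ‖qx‖ + ‖x⁻¹q⁻¹‖. -/
/-- The index (in `{1, …, 4g}`) of a letter of the free group of rank `2g`. -/
def letterIndex (g : ℕ) (x : Fin (2 * g) × Bool) : ℕ :=
  if x.2 then x.1.val + 1 else 2 * g + x.1.val + 1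

/-- The energy of `w`: writing the reduced word of `w` as `σ_{j₁} ⋯ σ_{j_k}`, the
energy is `Σᵢ (4g+1)^(i-1) · jᵢ`, interpreting the letter indices as digits in
base `4g+1` (the later letters of the word are the less significant digits). -/
def energy (g : ℕ) (w : FreeGroup (Fin (2 * g))) : ℕ :=
  (((FreeGroup.toWord w).reverse.zipIdx.map Prod.swap).map
    (fun p => (4 * g + 1) ^ p.1 * letterIndex g p.2)).sum

namespace EnergyAux

open FreeGroup

/-! ### Generic facts about `reduce` -/

variable {α : Type*} [DecidableEq α]

/-- The no-cancellation relation between adjacent letters. -/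
def Ok (a b : α × Bool) : Prop := ¬(a.1 = b.1 ∧ a.2 = !b.2)

theorem chain'_reduce (L : List (α × Bool)) : List.Chain' Ok (reduce L) := by
  induction L with
  | nil => exact List.isChain_nil
  | cons x L ih =>
    rw [FreeGroup.reduce.cons]
    cases h : reduce L with
    | nil => exact List.isChain_singleton _
    | cons hd tl =>
      rw [h] at ih
      dsimp only
      split_ifs with hc
      · exact ih.tail
      · exact List.isChain_cons_cons.mpr ⟨hc, ih⟩

theorem reduce_eq_self_of_chain' {L : List (α × Bool)} (h : List.Chain' Ok L) :
    reduce L = L := by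
  induction L with
  | nil => rfl
  | cons x L ih =>
    rw [FreeGroup.reduce.cons, ih h.tail]
    cases L with
    | nil => rfl
    | cons hd tl =>
      dsimp only
      rw [if_neg]
      exact (List.isChain_cons_cons.mp h).1

theorem chain'_of_reduced {L : List (α × Bool)} (h : reduce L = L) :
    List.Chain' Ok L := h ▸ chain'_reduce L

theorem reduced_prefix {L L' : List (α × Bool)} (h : reduce L = L) (h' : L' <+: L) :
    reduce L' = L' :=
  reduce_eq_self_of_chain' ((chain'_of_reduced h).prefix h')

theorem reduced_suffix {L L' : List (α × Bool)} (h : reduce L = L) (h' : L' <:+ L) :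
    reduce L' = L' :=
  reduce_eq_self_of_chain' ((chain'_of_reduced h).suffix h')

theorem invRev_append (L₁ L₂ : List (α × Bool)) :
    invRev (L₁ ++ L₂) = invRev L₂ ++ invRev L₁ := by
  simp [invRev]

theorem invRev_cons (a : α × Bool) (L : List (α × Bool)) :
    invRev (a :: L) = invRev L ++ [(a.1, !a.2)] := by
  simp [invRev]

/-- Structure of the reduction of a concatenation of two reduced words. -/
theorem reduce_append (u : List (α × Bool)) (hu : reduce u = u) :
    ∀ v : List (α × Bool), reduce v = v →
    ∃ u₁ u₂ v₁ v₂ : List (α × Bool), u = u₁ ++ u₂ ∧ v = v₁ ++ v₂ ∧ u₂ = invRev v₁ ∧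
      reduce (u ++ v) = u₁ ++ v₂ := by
  induction u using List.reverseRecOn with
  | nil =>
    intro v hv
    exact ⟨[], [], [], v, by simp, by simp, by simp [invRev], by simpa using hv⟩
  | append_singleton u' ℓ ih =>
    intro v hv
    cases v with
    | nil =>
      exact ⟨u' ++ [ℓ], [], [], [], by simp, rfl, by simp [invRev], by simpa using hu⟩
    | cons ℓ' v' =>
      by_cases hc : ℓ.1 = ℓ'.1 ∧ ℓ.2 = !ℓ'.2
      · have hu' : reduce u' = u' := reduced_prefix hu ⟨[ℓ], rfl⟩
        have hv' : reduce v' = v' := reduced_suffix hv (List.suffix_cons ℓ' v')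
        obtain ⟨u₁, u₂, v₁, v₂, e1, e2, e3, e4⟩ := ih hu' v' hv'
        have hℓ' : ℓ' = (ℓ.1, !ℓ.2) := by
          obtain ⟨h1, h2⟩ := hc
          cases ℓ'
          simp_all
        refine ⟨u₁, u₂ ++ [ℓ], ℓ' :: v₁, v₂, ?_, ?_, ?_, ?_⟩
        · rw [e1]; simp
        · rw [e2]; rfl
        · rw [invRev_cons, ← e3, hℓ']
          simp
        · have hstep : Red.Step ((u' ++ [ℓ]) ++ ℓ' :: v') (u' ++ v') := by
            have : (u' ++ [ℓ]) ++ ℓ' :: v' = u' ++ (ℓ.1, ℓ.2) :: (ℓ.1, !ℓ.2) :: v' := by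
              rw [hℓ']; simp
            rw [this]
            exact Red.Step.not
          rw [FreeGroup.reduce.Step.eq hstep, e4]
      · refine ⟨u' ++ [ℓ], [], [], ℓ' :: v', by simp, by simp, by simp [invRev], ?_⟩
        apply reduce_eq_self_of_chain'
        refine List.IsChain.append (chain'_of_reduced hu) (chain'_of_reduced hv) ?_
        intro a ha b hb
        rw [List.getLast?_concat] at ha
        simp only [List.head?_cons, Option.mem_some_iff] at ha hb
        subst ha; subst hb
        exact hc

theorem toWord_mul (x y : FreeGroup α) :
    (x * y).toWord = reduce (x.toWord ++ y.toWord) := by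
  conv_lhs => rw [← mk_toWord (x := x), ← mk_toWord (x := y)]
  rw [mul_mk, toWord_mk]

/-! ### The energy as a fold -/

/-- The energy of a word, as a left fold. -/
def en (g : ℕ) (L : List (Fin (2 * g) × Bool)) : ℕ :=
  L.foldl (fun a ℓ => a * (4 * g + 1) + letterIndex g ℓ) 0

theorem foldl_init {g : ℕ} (L : List (Fin (2 * g) × Bool)) (a : ℕ) :
    L.foldl (fun a ℓ => a * (4 * g + 1) + letterIndex g ℓ) a
      = a * (4 * g + 1) ^ L.length + en g L := by
  induction L generalizing a with
  | nil => simp [en]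
  | cons ℓ L ih =>
    show List.foldl _ (a * (4 * g + 1) + letterIndex g ℓ) L
      = a * (4 * g + 1) ^ (L.length + 1) + en g (ℓ :: L)
    have h2 : en g (ℓ :: L)
        = List.foldl (fun a ℓ => a * (4 * g + 1) + letterIndex g ℓ)
            (0 * (4 * g + 1) + letterIndex g ℓ) L := rfl
    rw [ih, h2, ih]
    ring

theorem en_append {g : ℕ} (L₁ L₂ : List (Fin (2 * g) × Bool)) :
    en g (L₁ ++ L₂) = en g L₁ * (4 * g + 1) ^ L₂.length + en g L₂ := by
  unfold en
  rw [List.foldl_append, foldl_init]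
  rfl

theorem en_cons {g : ℕ} (ℓ : Fin (2 * g) × Bool) (L : List (Fin (2 * g) × Bool)) :
    en g (ℓ :: L) = letterIndex g ℓ * (4 * g + 1) ^ L.length + en g L := by
  have : en g (ℓ :: L) = en g ([ℓ] ++ L) := rfl
  rw [this, en_append]
  have : en g [ℓ] = letterIndex g ℓ := by simp [en]
  rw [this]

theorem letterIndex_pos {g : ℕ} (ℓ : Fin (2 * g) × Bool) : 1 ≤ letterIndex g ℓ := by
  unfold letterIndex
  split <;> omega

theorem letterIndex_le {g : ℕ} (ℓ : Fin (2 * g) × Bool) : letterIndex g ℓ ≤ 4 * g := by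
  have := ℓ.1.isLt
  unfold letterIndex
  split <;> omega

theorem en_lt {g : ℕ} (L : List (Fin (2 * g) × Bool)) :
    en g L < (4 * g + 1) ^ L.length := by
  induction L with
  | nil => simp [en]
  | cons ℓ L ih =>
    rw [en_cons, List.length_cons, pow_succ]
    have h1 := letterIndex_le ℓ
    have h2 : 0 < (4 * g + 1) ^ L.length := pow_pos (by omega) _
    nlinarith

theorem en_ge {g : ℕ} (ℓ : Fin (2 * g) × Bool) (L : List (Fin (2 * g) × Bool)) :
    (4 * g + 1) ^ L.length ≤ en g (ℓ :: L) := by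
  rw [en_cons]
  have h1 := letterIndex_pos ℓ
  nlinarith [Nat.zero_le (en g L), pow_pos (show 0 < 4*g+1 by omega) L.length]

theorem energy_eq_en (g : ℕ) (w : FreeGroup (Fin (2 * g))) :
    energy g w = en g w.toWord := by
  suffices h : ∀ L : List (Fin (2 * g) × Bool),
      ((L.reverse.zipIdx.map Prod.swap).map (fun p => (4 * g + 1) ^ p.1 * letterIndex g p.2)).sum = en g L by
    exact h _
  intro L
  induction L with
  | nil => simp [en]
  | cons ℓ L ih =>
    rw [List.reverse_cons, List.zipIdx_append, List.map_append, List.map_append, List.sum_append, ih, en_cons]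
    have : List.zipIdx [ℓ] (0 + L.reverse.length) = [(ℓ, L.reverse.length)] := by simp
    rw [this]
    simp only [List.map_cons, List.map_nil, List.sum_cons, List.sum_nil, List.length_reverse, Prod.fst_swap, Prod.snd_swap]
    ring

end EnergyAux

open EnergyAux FreeGroup in
/-- Lemma (plq): if `‖p‖ < ‖q‖`, `|q| ≤ |x|`, and the product `q*x` involves no
cancellation, then `‖p*x‖ + ‖x⁻¹*p⁻¹‖ < ‖q*x‖ + ‖x⁻¹*q⁻¹‖`. -/
theorem energy_comparison (g : ℕ) (p q x : FreeGroup (Fin (2 * g)))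
    (hpq : energy g p < energy g q)
    (hqx : FreeGroup.norm q ≤ FreeGroup.norm x)
    (hred : FreeGroup.norm (q * x) = FreeGroup.norm q + FreeGroup.norm x) :
    energy g (p * x) + energy g (x⁻¹ * p⁻¹) <
      energy g (q * x) + energy g (x⁻¹ * q⁻¹) := by
  set B : ℕ := 4 * g + 1 with hB
  have hB1 : 1 ≤ B := by omega
  set P := p.toWord with hPdef
  set Q := q.toWord with hQdef
  set X := x.toWord with hXdef
  -- decomposition of the product p * x
  obtain ⟨a, abar, bbar, b, hP, hX, hab, hpx⟩ :=
    reduce_append P (reduce_toWord p) X (reduce_toWord x)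
  -- the product q * x has no cancellation
  have hQX : (q * x).toWord = Q ++ X := by
    obtain ⟨q₁, q₂, x₁, x₂, e1, e2, e3, e4⟩ :=
      reduce_append Q (reduce_toWord q) X (reduce_toWord x)
    have hlen : (q * x).toWord.length = Q.length + X.length := hred
    rw [EnergyAux.toWord_mul, e4] at hlen ⊢
    have l1 : Q.length = q₁.length + q₂.length := by rw [e1, List.length_append]
    have l2 : X.length = x₁.length + x₂.length := by rw [e2, List.length_append]
    have l3 : q₂.length = x₁.length := by rw [e3, invRev_length]
    rw [List.length_append] at hlen
    have hq2 : q₂ = [] := List.length_eq_zero_iff.mp (by omega)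
    have hx1 : x₁ = [] := List.length_eq_zero_iff.mp (by omega)
    rw [hq2] at e1; rw [hx1] at e2
    rw [List.append_nil] at e1
    rw [List.nil_append] at e2
    rw [← e1, ← e2]
  -- rewrite all four energies
  have hpxw : (p * x).toWord = a ++ b := by rw [EnergyAux.toWord_mul, hpx]
  have hipx : (x⁻¹ * p⁻¹).toWord = invRev b ++ invRev a := by
    rw [← mul_inv_rev, toWord_inv, hpxw, EnergyAux.invRev_append]
  have hiqx : (x⁻¹ * q⁻¹).toWord = invRev X ++ invRev Q := by
    rw [← mul_inv_rev, toWord_inv, hQX, EnergyAux.invRev_append]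
  rw [energy_eq_en, energy_eq_en, energy_eq_en, energy_eq_en, hpxw, hipx, hQX, hiqx,
    en_append, en_append, en_append, en_append]
  -- lengths
  have hlP : P.length = a.length + abar.length := by rw [hP, List.length_append]
  have hlX : X.length = bbar.length + b.length := by rw [hX, List.length_append]
  have hQXlen : Q.length ≤ X.length := hqx
  have hpq' : en g P < en g Q := by
    rw [hPdef, hQdef, ← energy_eq_en, ← energy_eq_en]
    exact hpq
  have hPQ : P.length ≤ Q.length := by
    by_contra hcon
    push_neg at hcon
    obtain ⟨ℓ, P', hP'⟩ : ∃ ℓ P', P = ℓ :: P' := by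
      cases hP2 : P with
      | nil => rw [hP2] at hcon; simp at hcon
      | cons ℓ P' => exact ⟨ℓ, P', rfl⟩
    have h1 : en g Q < B ^ Q.length := en_lt Q
    have h2 : B ^ P'.length ≤ en g P := by rw [hP']; exact en_ge ℓ P'
    have h3 : B ^ Q.length ≤ B ^ P'.length := by
      apply Nat.pow_le_pow_right (by omega)
      have : P.length = P'.length + 1 := by rw [hP']; simp
      omega
    omega
  -- key inequalities
  have hea : en g a ≤ en g P := by
    rw [hP, en_append, ← hB]
    nlinarith [Nat.zero_le (en g abar), Nat.one_le_two_pow (n := 1),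
      pow_pos (show 0 < B by omega) abar.length, Nat.zero_le (en g a)]
  have heaq : en g a + 1 ≤ en g Q := by omega
  have heb : en g b ≤ en g X := by
    rw [hX, en_append, ← hB]
    nlinarith [pow_pos (show 0 < B by omega) b.length, Nat.zero_le (en g bbar)]
  have heib : en g (invRev b) ≤ en g (invRev X) := by
    rw [hX, EnergyAux.invRev_append, en_append, ← hB]
    nlinarith [pow_pos (show 0 < B by omega) (invRev bbar).length,
      Nat.zero_le (en g (invRev b))]
  have hna : a.length ≤ Q.length := by omega
  have hnax : a.length ≤ X.length := by omega
  have h1 : en g (invRev a) < B ^ X.length := by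
    have := en_lt (invRev a)
    have hl : (invRev a).length = a.length := invRev_length
    rw [hl] at this
    exact lt_of_lt_of_le this (Nat.pow_le_pow_right hB1 hnax)
  have h2 : en g a * B ^ b.length + B ^ X.length ≤ en g Q * B ^ X.length := by
    have hbx : B ^ b.length ≤ B ^ X.length := Nat.pow_le_pow_right hB1 (by omega)
    calc en g a * B ^ b.length + B ^ X.length
        ≤ en g a * B ^ X.length + B ^ X.length := by
          exact Nat.add_le_add_right (Nat.mul_le_mul_left _ hbx) _
      _ = (en g a + 1) * B ^ X.length := by ring
      _ ≤ en g Q * B ^ X.length := Nat.mul_le_mul_right _ heaq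
  have h3 : en g (invRev b) * B ^ a.length ≤ en g (invRev X) * B ^ Q.length :=
    Nat.mul_le_mul heib (Nat.pow_le_pow_right hB1 hna)
  have h4 : 0 ≤ en g (invRev Q) := Nat.zero_le _
  have hia : (invRev a).length = a.length := invRev_length
  have hiX : (invRev X).length = X.length := invRev_length
  have hiQ : (invRev Q).length = Q.length := invRev_length
  rw [hia, hiQ, ← hB]
  linarith
end

section
/- Let c₁,…,c_m be elements of a free group F whose product c₁⋯c_m reduces to the identity, and suppose each c_i factors without internal cancellation as c_i = 𝓛_i 𝓦_i 𝓡_i where |𝓛_i| equals the left cancellation amount of c_i with c_{i-1}, |𝓡_i| equals the right cancellation amount with c_{i+1}, and |𝓦_i| > 0 for all i (with 𝓛₁ and 𝓡_m trivial). Then the product 𝓦₁𝓦₂⋯𝓦_m is a nonempty reduced word, contradicting that it must equal the identity; hence no such factorization exists. -/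
open List

namespace FreeGroupAux

variable {α : Type*} [DecidableEq α]

/-- The non-cancelling relation between adjacent letters. -/
def R : (α × Bool) → (α × Bool) → Prop := fun a b => ¬(a.1 = b.1 ∧ a.2 = !b.2)

lemma not_chain'_decomp {L : List (α × Bool)} (h : ¬ List.Chain' R L) :
    ∃ P a b Q, L = P ++ a :: b :: Q ∧ ¬ R a b := by
  induction L with
  | nil => exact absurd List.isChain_nil h
  | cons x l ih =>
    cases l with
    | nil => exact absurd (List.isChain_singleton x) h
    | cons y t =>
      rw [List.Chain', List.isChain_cons_cons] at h
      push_neg at h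
      by_cases hxy : R x y
      · obtain ⟨P, a, b, Q, hl, hab⟩ := ih (h hxy)
        exact ⟨x :: P, a, b, Q, by rw [hl]; rfl, hab⟩
      · exact ⟨[], x, y, t, rfl, hxy⟩

lemma chain'_of_reduced {L : List (α × Bool)} (h : FreeGroup.reduce L = L) :
    List.Chain' R L := by
  by_contra hc
  obtain ⟨P, a, b, Q, hl, hab⟩ := not_chain'_decomp hc
  unfold R at hab
  push_neg at hab
  obtain ⟨hab1, hab2⟩ := hab
  have hb : b = (a.1, !a.2) := by
    obtain ⟨b1, b2⟩ := b
    obtain ⟨a1, a2⟩ := a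
    simp_all
  rw [hl, hb] at h
  exact FreeGroup.reduce.not (L₂ := P) (L₃ := Q) (x := a.1) (b := a.2) h

lemma reduced_of_chain' {L : List (α × Bool)} (h : List.Chain' R L) :
    FreeGroup.reduce L = L := by
  induction L with
  | nil => rfl
  | cons x l ih =>
    have hl : FreeGroup.reduce l = l := ih h.tail
    rw [FreeGroup.reduce.cons, hl]
    cases l with
    | nil => rfl
    | cons hd tl =>
      have hR : R x hd := (List.isChain_cons_cons.mp h).1
      simp only [R] at hR
      show (if x.1 = hd.1 ∧ x.2 = !hd.2 then tl else x :: hd :: tl) = x :: hd :: tl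
      rw [if_neg hR]

lemma reduced_iff_chain' {L : List (α × Bool)} :
    FreeGroup.reduce L = L ↔ List.Chain' R L :=
  ⟨chain'_of_reduced, reduced_of_chain'⟩

lemma invRev_nil : FreeGroup.invRev ([] : List (α × Bool)) = [] := rfl

lemma invRev_length {L : List (α × Bool)} :
    (FreeGroup.invRev L).length = L.length := by
  simp [FreeGroup.invRev]

lemma invRev_concat {s : List (α × Bool)} {a : α × Bool} :
    FreeGroup.invRev (s ++ [a]) = (a.1, !a.2) :: FreeGroup.invRev s := by
  simp [FreeGroup.invRev]

/-- Cancellation decomposition of the product of two reduced words. -/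
lemma exists_cancel : ∀ (N : ℕ) (u v : List (α × Bool)), u.length ≤ N →
    FreeGroup.reduce u = u → FreeGroup.reduce v = v →
    ∃ p s q, u = p ++ s ∧ v = FreeGroup.invRev s ++ q ∧
      FreeGroup.reduce (u ++ v) = p ++ q := by
  intro N
  induction N with
  | zero =>
    intro u v hu _ hv
    have : u = [] := List.eq_nil_of_length_eq_zero (Nat.le_zero.mp hu)
    subst this
    exact ⟨[], [], v, rfl, by rw [invRev_nil]; rfl, by simpa using hv⟩
  | succ N ih =>
    intro u v hlen hu hv
    rcases u.eq_nil_or_concat with rfl | ⟨u', a, rfl⟩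
    · exact ⟨[], [], v, rfl, by rw [invRev_nil]; rfl, by simpa using hv⟩
    simp only [List.concat_eq_append] at hlen hu ⊢
    rcases v with _ | ⟨b, v'⟩
    · exact ⟨u' ++ [a], [], [], by simp, by rw [invRev_nil]; rfl, by simpa using hu⟩
    by_cases hab : R a b
    · -- no cancellation at the junction: the concatenation is reduced
      refine ⟨u' ++ [a], [], b :: v', by simp, by rw [invRev_nil]; rfl, ?_⟩
      apply reduced_of_chain'
      rw [List.Chain', List.isChain_append]
      refine ⟨chain'_of_reduced hu, chain'_of_reduced hv, ?_⟩
      intro x hx y hy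
      rw [List.getLast?_append] at hx
      simp only [List.getLast?_singleton, Option.mem_def, Option.some.injEq,
        List.head?_cons] at hx hy
      have hx2 : some a = some x := hx
      have hax : a = x := by injection hx2
      rw [← hax, ← hy]
      exact hab
    · -- cancellation at the junction
      unfold R at hab
      push_neg at hab
      obtain ⟨hab1, hab2⟩ := hab
      have hb : b = (a.1, !a.2) := by
        obtain ⟨b1, b2⟩ := b
        simp only [Prod.mk.injEq]
        exact ⟨hab1.symm, by rw [hab2]; simp⟩
      subst hb
      have hu' : FreeGroup.reduce u' = u' :=
        reduced_of_chain' ((chain'_of_reduced hu).prefix ⟨[a], rfl⟩)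
      have hv' : FreeGroup.reduce v' = v' :=
        reduced_of_chain' ((chain'_of_reduced hv).suffix ⟨[(a.1, !a.2)], rfl⟩)
      have hlen' : u'.length ≤ N := by
        have := hlen
        simp at this
        omega
      obtain ⟨p, s, q, h1, h2, h3⟩ := ih u' v' hlen' hu' hv'
      refine ⟨p, s ++ [a], q, by rw [h1]; simp, ?_, ?_⟩
      · rw [invRev_concat, List.cons_append, ← h2]
      · have hstep : FreeGroup.Red.Step ((u' ++ [a]) ++ (a.1, !a.2) :: v') (u' ++ v') := by
          have : (u' ++ [a]) ++ (a.1, !a.2) :: v' = u' ++ (a.1, a.2) :: (a.1, !a.2) :: v' := by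
            simp
          rw [this]
          exact FreeGroup.Red.Step.not
        rw [List.append_assoc] at hstep ⊢
        rw [FreeGroup.reduce.Step.eq hstep, h3]

lemma toWord_mul (x y : FreeGroup α) :
    (x * y).toWord = FreeGroup.reduce (x.toWord ++ y.toWord) := by
  conv_lhs => rw [← FreeGroup.mk_toWord (x := x), ← FreeGroup.mk_toWord (x := y)]
  rw [FreeGroup.mul_mk, FreeGroup.toWord_mk]

lemma norm_eq (x : FreeGroup α) : FreeGroup.norm x = x.toWord.length := rfl

/-- Key lemma: non-overlapping cancellations. If the cancellation between `x` and `y`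
is `a`, between `y` and `z` is `b`, and `a + b < |y|`, then the cancellation between
`x*y` and `z` is again `b`. -/
lemma key (x y z : FreeGroup α) (a b : ℕ)
    (h1 : FreeGroup.norm x + FreeGroup.norm y = FreeGroup.norm (x * y) + 2 * a)
    (h2 : FreeGroup.norm y + FreeGroup.norm z = FreeGroup.norm (y * z) + 2 * b)
    (h3 : a + b < FreeGroup.norm y) :
    FreeGroup.norm (x * y) + FreeGroup.norm z = FreeGroup.norm (x * y * z) + 2 * b := by
  obtain ⟨p, s, q, e1, e2, e3⟩ :=
    exists_cancel x.toWord.length x.toWord y.toWord le_rfl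
      (FreeGroup.reduce_toWord x) (FreeGroup.reduce_toWord y)
  obtain ⟨p₂, s₂, q₂, f1, f2, f3⟩ :=
    exists_cancel y.toWord.length y.toWord z.toWord le_rfl
      (FreeGroup.reduce_toWord y) (FreeGroup.reduce_toWord z)
  rw [← toWord_mul] at e3 f3
  -- lengths
  have lx : FreeGroup.norm x = p.length + s.length := by rw [norm_eq, e1]; simp
  have ly : FreeGroup.norm y = s.length + q.length := by
    rw [norm_eq, e2]; simp [invRev_length]
  have ly' : FreeGroup.norm y = p₂.length + s₂.length := by rw [norm_eq, f1]; simp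
  have lz : FreeGroup.norm z = s₂.length + q₂.length := by
    rw [norm_eq, f2]; simp [invRev_length]
  have lxy : FreeGroup.norm (x * y) = p.length + q.length := by rw [norm_eq, e3]; simp
  have lyz : FreeGroup.norm (y * z) = p₂.length + q₂.length := by rw [norm_eq, f3]; simp
  have hsa : s.length = a := by omega
  have hsb : s₂.length = b := by omega
  -- `invRev s` is a prefix of `p₂`
  have hA : FreeGroup.invRev s <+: y.toWord := ⟨q, e2.symm⟩
  have hB : p₂ <+: y.toWord := ⟨s₂, f1.symm⟩
  have hpre : FreeGroup.invRev s <+: p₂ :=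
    List.prefix_of_prefix_length_le hA hB (by rw [invRev_length]; omega)
  obtain ⟨q₀, hq₀⟩ := hpre
  have hq : q = q₀ ++ s₂ := by
    apply List.append_cancel_left (as := FreeGroup.invRev s)
    rw [← e2, f1, ← hq₀]; simp
  have hq₀len : 0 < q₀.length := by
    have : p₂.length = (FreeGroup.invRev s).length + q₀.length := by rw [← hq₀]; simp
    rw [invRev_length] at this
    omega
  -- the product x*y*z
  have hxyz : x * y * z = FreeGroup.mk ((p ++ q₀) ++ q₂) := by
    conv_lhs => rw [← FreeGroup.mk_toWord (x := x * y), ← FreeGroup.mk_toWord (x := z)]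
    rw [e3, hq, f2, FreeGroup.mul_mk]
    have : (p ++ (q₀ ++ s₂)) ++ (FreeGroup.invRev s₂ ++ q₂) =
        (p ++ q₀) ++ (s₂ ++ FreeGroup.invRev s₂) ++ q₂ := by simp
    rw [this, ← FreeGroup.mul_mk (L₁ := (p ++ q₀) ++ (s₂ ++ FreeGroup.invRev s₂)),
      ← FreeGroup.mul_mk (L₁ := p ++ q₀),
      ← FreeGroup.mul_mk (L₁ := s₂), ← FreeGroup.inv_mk, mul_inv_cancel, mul_one,
      FreeGroup.mul_mk]
  -- reducedness of (p ++ q₀) ++ q₂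
  have hc1 : List.Chain' R (p ++ q₀) := by
    have := chain'_of_reduced (L := (x * y).toWord) (FreeGroup.reduce_toWord _)
    rw [e3, hq] at this
    exact this.prefix ⟨s₂, by simp⟩
  have hc2 : List.Chain' R (q₀ ++ q₂) := by
    have := chain'_of_reduced (L := (y * z).toWord) (FreeGroup.reduce_toWord _)
    rw [f3, ← hq₀] at this
    exact this.suffix ⟨FreeGroup.invRev s, by simp⟩
  have hred : FreeGroup.reduce ((p ++ q₀) ++ q₂) = (p ++ q₀) ++ q₂ := by
    apply reduced_of_chain'
    rw [List.Chain', List.isChain_append]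
    refine ⟨hc1, (List.isChain_append.mp hc2).2.1, ?_⟩
    intro u hu w hw
    have hns : q₀ ≠ [] := by
      intro h
      rw [h] at hq₀len
      simp at hq₀len
    apply (List.isChain_append.mp hc2).2.2 u _ w hw
    rw [List.getLast?_append,
      Option.or_of_isSome (List.getLast?_isSome.mpr hns)] at hu
    try exact hu
  have lxyz : FreeGroup.norm (x * y * z) = p.length + q₀.length + q₂.length := by
    rw [norm_eq, hxyz, FreeGroup.toWord_mk, hred]
    simp only [List.length_append]
  have hqlen : q.length = q₀.length + s₂.length := by rw [hq]; simp
  omega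

end FreeGroupAux

/-- Lemma (emptyW contradiction): suppose `c₀ ⋯ c_{m-1}` reduces to the identity
in a free group, and each `c_i` factors without internal cancellation as
`c_i = 𝓛_i * 𝓦_i * 𝓡_i`, where `|𝓛_i|` is exactly the cancellation amount of
`c_i` with `c_{i-1}` and `|𝓡_i|` is exactly the cancellation amount with
`c_{i+1}`, with `𝓛₀` and `𝓡_{m-1}` trivial and every `𝓦_i` nonempty.  Then we
reach a contradiction: no such factorization exists. -/
theorem no_exact_factorization (n m : ℕ) (hm : 1 ≤ m)
    (c L W R : ℕ → FreeGroup (Fin n))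
    (hprod : ((List.range m).map c).prod = 1)
    (hfac : ∀ i < m, c i = L i * W i * R i)
    (hnc : ∀ i < m, FreeGroup.norm (c i) =
      FreeGroup.norm (L i) + FreeGroup.norm (W i) + FreeGroup.norm (R i))
    (hL : ∀ i, 0 < i → i < m →
      FreeGroup.norm (c (i - 1)) + FreeGroup.norm (c i) =
        FreeGroup.norm (c (i - 1) * c i) + 2 * FreeGroup.norm (L i))
    (hR : ∀ i, i + 1 < m →
      FreeGroup.norm (c i) + FreeGroup.norm (c (i + 1)) =
        FreeGroup.norm (c i * c (i + 1)) + 2 * FreeGroup.norm (R i))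
    (hW : ∀ i < m, 0 < FreeGroup.norm (W i))
    (hL0 : L 0 = 1) (hRlast : R (m - 1) = 1) : False := by
  classical
  set P : ℕ → FreeGroup (Fin n) := fun k => ((List.range k).map c).prod with hPdef
  have hP : ∀ k, P (k + 1) = P k * c k := by
    intro k
    simp [hPdef, List.range_succ]
  have hP1 : P 1 = c 0 := by simp [hPdef, List.range_succ]
  rcases Nat.lt_or_ge m 2 with hm2 | hm2
  · -- m = 1
    have hm1 : m = 1 := by omega
    subst hm1
    have h0 : c 0 = 1 := by simpa [List.range_succ] using hprod
    have : FreeGroup.norm (c 0) = 0 := by rw [h0]; exact FreeGroup.norm_one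
    have := hnc 0 (by omega)
    have := hW 0 (by omega)
    omega
  · -- m ≥ 2
    have Inv : ∀ k, 1 ≤ k → k < m →
        FreeGroup.norm (P k) + FreeGroup.norm (c k) =
          FreeGroup.norm (P k * c k) + 2 * FreeGroup.norm (L k) := by
      intro k hk
      induction k, hk using Nat.le_induction with
      | base =>
        intro h1m
        rw [hP1]
        simpa using hL 1 (by omega) h1m
      | succ k hk ih =>
        intro hk1m
        have hkm : k < m := by omega
        have h1 := ih hkm
        have h2 := hR k hk1m
        have h3 : FreeGroup.norm (L k) + FreeGroup.norm (R k) < FreeGroup.norm (c k) := by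
          have := hnc k hkm
          have := hW k hkm
          omega
        have hkey := FreeGroupAux.key (P k) (c k) (c (k + 1))
          (FreeGroup.norm (L k)) (FreeGroup.norm (R k)) h1 h2 (by omega)
        have hLk1 := hL (k + 1) (by omega) hk1m
        simp only [Nat.add_sub_cancel] at hLk1
        have hRL : FreeGroup.norm (R k) = FreeGroup.norm (L (k + 1)) := by omega
        rw [hP]
        omega
    have hfin := Inv (m - 1) (by omega) (by omega)
    have hPm : P (m - 1) * c (m - 1) = 1 := by
      have := hP (m - 1)
      rw [show m - 1 + 1 = m by omega] at this
      rw [← this]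
      exact hprod
    have hPinv : P (m - 1) = (c (m - 1))⁻¹ := eq_inv_of_mul_eq_one_left hPm
    rw [hPm, hPinv, FreeGroup.norm_inv_eq, FreeGroup.norm_one] at hfin
    have := hnc (m - 1) (by omega)
    have := hW (m - 1) (by omega)
    omega
end
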